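/- Spectral properties, part 6: Let X be a complex infinite-dimensional separable Banach space and let A be a densely defined linear operator in X such that every power A^n (n ∈ ℕ) is a closed operator, and suppose there exist a set Y ⊆ C^∞(A) dense in X and a mapping B : Y → Y with ABf = f for every f ∈ Y, such that (a) Y ⊆ ⋃_{n≥1} ker A^n, and (b) for every f ∈ Y and every α ∈ (0,1) there exists c = c(f,α) > 0 with ‖B^n f‖ ≤ c·α^n for all n ∈ ℕ. Then for every γ ∈ (0,1) there exists M ∈ ℕ such that for all n ≥ M the closed disk {λ ∈ ℂ : |λ| ≤ 1/γ^n} is contained in σ_p(A^n); in particular, for every λ ∈ ℂ there exists M ∈ ℕ such that λ ∈ σ_p(A^n) for all n ≥ M. -/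

import Mathlib

open Filter Topology TopologicalSpace

/-- The domain of the `n`-th power of the operator `A` with domain `D`:
`x ∈ D(Aⁿ)` iff `Aᵏx ∈ D(A)` for all `k < n`. -/
def opDom {X : Type*} (A : X → X) (D : Set X) (n : ℕ) : Set X :=
  {x | ∀ k < n, A^[k] x ∈ D}

/-- `C^∞(A) = ⋂ₙ D(Aⁿ)`. -/
def opCinf {X : Type*} (A : X → X) (D : Set X) : Set X :=
  {x | ∀ k : ℕ, A^[k] x ∈ D}

/-- `A` is linear on the subspace `D`. -/
def IsLinearOn (𝕜 : Type*) {X : Type*} [RCLike 𝕜] [NormedAddCommGroup X]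
    [NormedSpace 𝕜 X] (A : X → X) (D : Set X) : Prop :=
  (∀ x ∈ D, ∀ y ∈ D, A (x + y) = A x + A y) ∧
  (∀ (c : 𝕜), ∀ x ∈ D, A (c • x) = c • A x)

/-- The `n`-th power of `A` (with domain `D`) is a closed operator:
its graph is closed in `X × X`. -/
def ClosedPower {X : Type*} [NormedAddCommGroup X] (A : X → X) (D : Set X)
    (n : ℕ) : Prop :=
  IsClosed {p : X × X | p.1 ∈ opDom A D n ∧ p.2 = A^[n] p.1}

/-- A hypercyclic vector for `A`: a nonzero `f ∈ C^∞(A)` with dense orbit. -/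
def HypercyclicVec {X : Type*} [NormedAddCommGroup X] (A : X → X) (D : Set X)
    (f : X) : Prop :=
  f ∈ opCinf A D ∧ f ≠ 0 ∧ Dense (Set.range fun n : ℕ => A^[n] f)

/-- `A` (with domain `D`) is hypercyclic. -/
def HypercyclicOp {X : Type*} [NormedAddCommGroup X] (A : X → X) (D : Set X) :
    Prop :=
  ∃ f, HypercyclicVec A D f

/-- `f` is a periodic point of `A`: `f ∈ D(A^N)` and `A^N f = f` for some `N ≥ 1`. -/
def PeriodicPt {X : Type*} (A : X → X) (D : Set X) (f : X) : Prop :=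
  ∃ N : ℕ, 0 < N ∧ f ∈ opDom A D N ∧ A^[N] f = f

/-- `A` (with domain `D`) is chaotic: hypercyclic with a dense set of periodic
points. -/
def ChaoticOp {X : Type*} [NormedAddCommGroup X] (A : X → X) (D : Set X) : Prop :=
  HypercyclicOp A D ∧ Dense {f | PeriodicPt A D f}

/-- The local quantity `r(T,f) = limsup ‖Tⁿ f‖^{1/n}`, computed in `ℝ≥0∞`. -/
noncomputable def orbitRad {X : Type*} [NormedAddCommGroup X] (T : X → X)
    (f : X) : ENNReal :=
  Filter.limsup (fun n : ℕ => (‖T^[n] f‖₊ : ENNReal) ^ (1 / (n : ℝ))) Filter.atTop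

/-- The point spectrum of the `n`-th power of `A` (with domain `D`):
`λ ∈ σ_p(Aⁿ)` iff `Aⁿ g = λ g` for some nonzero `g ∈ D(Aⁿ)`. -/
def pointSpecPow {X : Type*} [NormedAddCommGroup X] [NormedSpace ℂ X]
    (A : X → X) (D : Set X) (n : ℕ) : Set ℂ :=
  {l | ∃ g, g ≠ 0 ∧ g ∈ opDom A D n ∧ A^[n] g = l • g}


section Helpers

variable {X : Type*} [NormedAddCommGroup X] [NormedSpace ℂ X]
  {D : Submodule ℂ X} {A : X → X}

private lemma opCinf_subset_opDom (n : ℕ) {x : X} (hx : x ∈ opCinf A (D : Set X)) :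
    x ∈ opDom A (D : Set X) n := fun k _ => hx k

private lemma iter_add' (hlin : IsLinearOn ℂ A (D : Set X)) {x y : X}
    (hx : x ∈ opCinf A (D : Set X)) (hy : y ∈ opCinf A (D : Set X)) (n : ℕ) :
    A^[n] (x + y) = A^[n] x + A^[n] y := by
  induction n with
  | zero => rfl
  | succ n ih =>
    rw [Function.iterate_succ_apply', Function.iterate_succ_apply' (f := A) (n := n) (x := x),
      Function.iterate_succ_apply' (f := A) (n := n) (x := y), ih]
    exact hlin.1 _ (hx n) _ (hy n)

private lemma iter_smul' (hlin : IsLinearOn ℂ A (D : Set X)) {x : X}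
    (hx : x ∈ opCinf A (D : Set X)) (c : ℂ) (n : ℕ) :
    A^[n] (c • x) = c • A^[n] x := by
  induction n with
  | zero => rfl
  | succ n ih =>
    rw [Function.iterate_succ_apply', Function.iterate_succ_apply' (f := A) (n := n) (x := x), ih]
    exact hlin.2 c _ (hx n)

private lemma opCinf_add' (hlin : IsLinearOn ℂ A (D : Set X)) {x y : X}
    (hx : x ∈ opCinf A (D : Set X)) (hy : y ∈ opCinf A (D : Set X)) :
    x + y ∈ opCinf A (D : Set X) := fun k => by
  rw [iter_add' hlin hx hy]; exact D.add_mem (hx k) (hy k)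

private lemma opCinf_smul' (hlin : IsLinearOn ℂ A (D : Set X)) {x : X}
    (hx : x ∈ opCinf A (D : Set X)) (c : ℂ) :
    c • x ∈ opCinf A (D : Set X) := fun k => by
  rw [iter_smul' hlin hx c]; exact D.smul_mem c (hx k)

private lemma map_zero'' (hlin : IsLinearOn ℂ A (D : Set X)) : A 0 = 0 := by
  have h := hlin.2 (0 : ℂ) 0 D.zero_mem
  simpa using h

private lemma iter_zero' (hlin : IsLinearOn ℂ A (D : Set X)) (n : ℕ) :
    A^[n] (0 : X) = 0 := by
  induction n with
  | zero => rfl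
  | succ n ih => rw [Function.iterate_succ_apply', ih, map_zero'' hlin]

private lemma opCinf_zero' (hlin : IsLinearOn ℂ A (D : Set X)) :
    (0 : X) ∈ opCinf A (D : Set X) := fun k => by
  rw [iter_zero' hlin]; exact D.zero_mem

private lemma opCinf_sum' (hlin : IsLinearOn ℂ A (D : Set X)) {u : ℕ → X}
    (hu : ∀ j, u j ∈ opCinf A (D : Set X)) (m : ℕ) :
    (∑ j ∈ Finset.range m, u j) ∈ opCinf A (D : Set X) := by
  induction m with
  | zero => simpa using opCinf_zero' hlin
  | succ m ih =>
    rw [Finset.sum_range_succ]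
    exact opCinf_add' hlin ih (hu m)

private lemma iter_sum' (hlin : IsLinearOn ℂ A (D : Set X)) {u : ℕ → X}
    (hu : ∀ j, u j ∈ opCinf A (D : Set X)) (n m : ℕ) :
    A^[n] (∑ j ∈ Finset.range m, u j) = ∑ j ∈ Finset.range m, A^[n] (u j) := by
  induction m with
  | zero => simpa using iter_zero' hlin n
  | succ m ih =>
    rw [Finset.sum_range_succ, iter_add' hlin (opCinf_sum' hlin hu m) (hu m), ih,
      Finset.sum_range_succ]

private lemma iter_AB' {Y : Set X} {B : X → X} (hBmaps : Set.MapsTo B Y Y)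
    (h1 : ∀ f ∈ Y, A (B f) = f) {f : X} (hf : f ∈ Y) (k : ℕ) :
    A^[k] (B^[k] f) = f := by
  induction k with
  | zero => rfl
  | succ k ih =>
    rw [Function.iterate_succ_apply (f := A), Function.iterate_succ_apply' (f := B),
      h1 _ ((hBmaps.iterate k) hf), ih]

end Helpers

/-- **Spectral properties, part 6.** -/
theorem spectral_properties_part6
    {X : Type*} [NormedAddCommGroup X] [NormedSpace ℂ X]
    [CompleteSpace X] [SeparableSpace X]
    (hinfdim : ¬ FiniteDimensional ℂ X)
    (D : Submodule ℂ X) (A : X → X)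
    (hlin : IsLinearOn ℂ A (D : Set X))
    (hdd : Dense (D : Set X))
    (hcl : ∀ n : ℕ, 0 < n → ClosedPower A (D : Set X) n)
    (Y : Set X) (hYsub : Y ⊆ opCinf A (D : Set X)) (hYdense : Dense Y)
    (B : X → X) (hBmaps : Set.MapsTo B Y Y)
    (h1 : ∀ f ∈ Y, A (B f) = f)
    (h2a : ∀ f ∈ Y, ∃ N : ℕ, ∀ n ≥ N, A^[n] f = 0)
    (h2b : ∀ f ∈ Y, ∀ α ∈ Set.Ioo (0 : ℝ) 1, ∃ c > 0, ∀ n : ℕ, 0 < n →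
      ‖B^[n] f‖ ≤ c * α ^ n) :
    (∀ γ : ℝ, 0 < γ → γ < 1 →
      ∃ M : ℕ, 0 < M ∧ ∀ n ≥ M, ∀ l : ℂ, ‖l‖ ≤ 1 / γ ^ n →
        l ∈ pointSpecPow A (D : Set X) n) ∧
    (∀ l : ℂ, ∃ M : ℕ, 0 < M ∧ ∀ n ≥ M, l ∈ pointSpecPow A (D : Set X) n) := by
  classical
  have hX : ∃ x : X, x ≠ 0 := by
    by_contra hcon
    push_neg at hcon
    have hsub : Subsingleton X := ⟨fun a b => by rw [hcon a, hcon b]⟩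
    exact hinfdim inferInstance
  obtain ⟨x0, hx0⟩ := hX
  obtain ⟨f, hfY, hf0⟩ : ∃ f ∈ Y, f ≠ (0 : X) := by
    obtain ⟨f, hf1, hf2⟩ := hYdense.exists_mem_open isOpen_compl_singleton
      ⟨x0, by simpa using hx0⟩
    exact ⟨f, hf1, by simpa using hf2⟩
  obtain ⟨N, hN⟩ := h2a f hfY
  have hfpos : (0 : ℝ) < ‖f‖ := norm_pos_iff.mpr hf0
  have key : ∀ γ : ℝ, 0 < γ → γ < 1 →
      ∃ M : ℕ, 0 < M ∧ ∀ n ≥ M, ∀ l : ℂ, ‖l‖ ≤ 1 / γ ^ n →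
        l ∈ pointSpecPow A (D : Set X) n := by
    intro γ hγ0 hγ1
    obtain ⟨c, hc0, hc⟩ := h2b f hfY (γ ^ 2) ⟨by positivity, by nlinarith⟩
    have hγn : Tendsto (fun n : ℕ => γ ^ n) atTop (𝓝 0) :=
      tendsto_pow_atTop_nhds_zero_of_lt_one hγ0.le hγ1
    have htend : Tendsto (fun n : ℕ => c * γ ^ n * (1 - γ ^ n)⁻¹) atTop
        (𝓝 (c * 0 * ((1 : ℝ) - 0)⁻¹)) :=
      (hγn.const_mul c).mul ((tendsto_const_nhds.sub hγn).inv₀ (by norm_num))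
    rw [show c * 0 * ((1 : ℝ) - 0)⁻¹ = 0 by ring] at htend
    have hev : ∀ᶠ n in atTop, c * γ ^ n * (1 - γ ^ n)⁻¹ < ‖f‖ :=
      htend.eventually_lt_const hfpos
    obtain ⟨M₀, hM₀⟩ := eventually_atTop.mp hev
    refine ⟨max M₀ (N + 1), lt_of_lt_of_le (Nat.succ_pos N) (le_max_right _ _), ?_⟩
    intro n hn l hl
    have hnN1 : N + 1 ≤ n := le_trans (le_max_right M₀ (N + 1)) hn
    have hnM₀ : M₀ ≤ n := le_trans (le_max_left M₀ (N + 1)) hn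
    have hn1 : 1 ≤ n := le_trans (Nat.succ_le_succ (Nat.zero_le N)) hnN1
    have hAf : A^[n] f = 0 := hN n (by omega)
    have hγn0 : (0 : ℝ) < γ ^ n := by positivity
    have hγnlt : γ ^ n < 1 := pow_lt_one₀ hγ0.le hγ1 (by omega)
    set u : ℕ → X := fun j => l ^ j • B^[j * n] f with hu
    have huY : ∀ j, B^[j * n] f ∈ Y := fun j => (hBmaps.iterate (j * n)) hfY
    have huC : ∀ j, u j ∈ opCinf A (D : Set X) := fun j =>
      opCinf_smul' hlin (hYsub (huY j)) _
    have hu0 : u 0 = f := by simp [hu]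
    have hbound : ∀ j, ‖u (j + 1)‖ ≤ c * (γ ^ n) ^ (j + 1) := by
      intro j
      have he1 : ‖u (j + 1)‖ = ‖l‖ ^ (j + 1) * ‖B^[(j + 1) * n] f‖ := by
        rw [hu]; simp [norm_smul]
      have he2 : ‖B^[(j + 1) * n] f‖ ≤ c * (γ ^ 2) ^ ((j + 1) * n) :=
        hc _ (Nat.mul_pos (Nat.succ_pos j) (by omega))
      have he3 : ‖l‖ ^ (j + 1) ≤ (1 / γ ^ n) ^ (j + 1) :=
        pow_le_pow_left₀ (norm_nonneg l) hl _
      have he4 : (1 / γ ^ n) ^ (j + 1) * (c * (γ ^ 2) ^ ((j + 1) * n))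
          = c * (γ ^ n) ^ (j + 1) := by
        have hexp : (γ ^ 2) ^ ((j + 1) * n) = (γ ^ n) ^ (j + 1) * (γ ^ n) ^ (j + 1) := by
          rw [← pow_mul, ← pow_mul, ← pow_add]
          ring_nf
        rw [hexp, div_pow, one_pow]
        field_simp
      calc ‖u (j + 1)‖ ≤ (1 / γ ^ n) ^ (j + 1) * (c * (γ ^ 2) ^ ((j + 1) * n)) := by
            rw [he1]
            exact mul_le_mul he3 he2 (norm_nonneg _) (by positivity)
        _ = c * (γ ^ n) ^ (j + 1) := he4
    have hboundC : ∀ j, ‖u j‖ ≤ max ‖f‖ c * (γ ^ n) ^ j := by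
      intro j
      cases j with
      | zero => simpa [hu0] using le_max_left ‖f‖ c
      | succ j =>
        refine (hbound j).trans ?_
        exact mul_le_mul_of_nonneg_right (le_max_right _ _) (by positivity)
    have hsum : Summable u :=
      Summable.of_norm_bounded
        ((summable_geometric_of_lt_one hγn0.le hγnlt).mul_left (max ‖f‖ c)) hboundC
    set h := ∑' j, u j with hh
    have hS : Tendsto (fun m => ∑ j ∈ Finset.range m, u j) atTop (𝓝 h) :=
      hsum.hasSum.tendsto_sum_nat
    have htail : HasSum (fun j : ℕ => c * γ ^ n * (γ ^ n) ^ j)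
        (c * γ ^ n * (1 - γ ^ n)⁻¹) :=
      (hasSum_geometric_of_lt_one hγn0.le hγnlt).mul_left _
    have hnormtail : ‖∑' j, u (j + 1)‖ ≤ c * γ ^ n * (1 - γ ^ n)⁻¹ := by
      refine tsum_of_norm_bounded htail (fun j => ?_)
      calc ‖u (j + 1)‖ ≤ c * (γ ^ n) ^ (j + 1) := hbound j
        _ = c * γ ^ n * (γ ^ n) ^ j := by rw [pow_succ]; ring
    have hsplit : h = f + ∑' j, u (j + 1) := by
      rw [hh, Summable.tsum_eq_zero_add hsum, hu0]
    have hne : h ≠ 0 := by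
      intro h0
      have ht : (∑' j, u (j + 1)) = -f := by
        have h2 := hsplit
        rw [h0] at h2
        linear_combination (norm := abel) -h2
      rw [ht, norm_neg] at hnormtail
      exact absurd (lt_of_le_of_lt hnormtail (hM₀ n hnM₀)) (lt_irrefl _)
    have keyAB : ∀ j, A^[n] (B^[(j + 1) * n] f) = B^[j * n] f := by
      intro j
      have hmn : (j + 1) * n = n + j * n := by ring
      rw [hmn, Function.iterate_add_apply,
        iter_AB' hBmaps h1 ((hBmaps.iterate (j * n)) hfY) n]
    have hAu0 : A^[n] (u 0) = 0 := by rw [hu0, hAf]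
    have hAuS : ∀ j, A^[n] (u (j + 1)) = l • u j := by
      intro j
      rw [hu]
      simp only
      rw [iter_smul' hlin (hYsub (huY (j + 1))) _ n, keyAB j, pow_succ', mul_smul]
    have hApartial : ∀ m, A^[n] (∑ j ∈ Finset.range (m + 1), u j)
        = l • ∑ j ∈ Finset.range m, u j := by
      intro m
      rw [iter_sum' hlin huC n (m + 1), Finset.sum_range_succ']
      simp only [hAuS, hAu0, add_zero]
      rw [← Finset.smul_sum]
    have hpairs : Tendsto (fun m => ((∑ j ∈ Finset.range (m + 1), u j),
        l • ∑ j ∈ Finset.range m, u j)) atTop (𝓝 (h, l • h)) :=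
      (hS.comp (tendsto_add_atTop_nat 1)).prodMk_nhds (hS.const_smul l)
    have hmem : (h, l • h) ∈ {p : X × X | p.1 ∈ opDom A (D : Set X) n ∧ p.2 = A^[n] p.1} := by
      refine (hcl n (by omega)).mem_of_tendsto hpairs (Filter.Eventually.of_forall fun m => ?_)
      exact ⟨opCinf_subset_opDom n (opCinf_sum' hlin huC (m + 1)), (hApartial m).symm⟩
    exact ⟨h, hne, hmem.1, hmem.2.symm⟩
  refine ⟨key, ?_⟩
  intro l
  obtain ⟨M, hM0, hM⟩ := key (1 / 2) (by norm_num) (by norm_num)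
  have hK : ∃ K : ℕ, ‖l‖ ≤ 2 ^ K := by
    obtain ⟨K, hK⟩ := exists_nat_ge ‖l‖
    refine ⟨K, hK.trans ?_⟩
    exact_mod_cast Nat.le_of_lt (Nat.lt_two_pow_self (n := K))
  obtain ⟨K, hK⟩ := hK
  refine ⟨max M K, lt_of_lt_of_le hM0 (le_max_left _ _), fun n hn => ?_⟩
  refine hM n (le_trans (le_max_left M K) hn) l ?_
  have h2n : ‖l‖ ≤ (2 : ℝ) ^ n :=
    hK.trans (pow_le_pow_right₀ one_le_two (le_trans (le_max_right M K) hn))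
  calc ‖l‖ ≤ (2 : ℝ) ^ n := h2n
    _ = 1 / (1 / 2 : ℝ) ^ n := by
        rw [one_div, one_div, inv_pow, inv_inv]
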